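/- Let Q be a skew polynomial ring with its associated skew bicharacter χ on the group G generated by the normalizing automorphisms of the variables, grading Q by G. If f ∈ Q is a homogeneous normal element, then χ(x^I, x^J) = 1 for all monomials x^I, x^J in the support of f; that is, any two monomials appearing in a normal element commute with each other. -/

import Mathlib

noncomputable section

/-- The skew-commutation relations defining the skew polynomial ring. -/
def skewRel (k : Type*) [Field k] {n : ℕ} (q : Fin n → Fin n → kˣ) :
    FreeAlgebra k (Fin n) → FreeAlgebra k (Fin n) → Prop :=
  fun a b => ∃ i j : Fin n, a = FreeAlgebra.ι k i * FreeAlgebra.ι k j ∧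
    b = (q i j : k) • (FreeAlgebra.ι k j * FreeAlgebra.ι k i)

/-- The skew polynomial ring `k_q[x₁,…,xₙ]`. -/
abbrev SkewPoly (k : Type*) [Field k] {n : ℕ} (q : Fin n → Fin n → kˣ) : Type _ :=
  RingQuot (skewRel k q)

/-- The variables `x i` of the skew polynomial ring. -/
def skewVar (k : Type*) [Field k] {n : ℕ} (q : Fin n → Fin n → kˣ) (i : Fin n) :
    SkewPoly k q :=
  RingQuot.mkAlgHom k (skewRel k q) (FreeAlgebra.ι k i)

/-- The span of the words of length `d` in the variables: the homogeneous component of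
internal degree `d` of the skew polynomial ring (deg xᵢ = 1). -/
def wordSpan (k : Type*) [Field k] {n : ℕ} (q : Fin n → Fin n → kˣ) (d : ℕ) :
    Submodule k (SkewPoly k q) :=
  Submodule.span k
    {m : SkewPoly k q | ∃ w : List (Fin n), w.length = d ∧ m = (w.map (skewVar k q)).prod}


/-- The ordered monomial x^I = x₁^{i₁}⋯xₙ^{iₙ}. -/
def skewMonomial (k : Type*) [Field k] {n : ℕ} (q : Fin n → Fin n → kˣ)
    (I : Fin n → ℕ) : SkewPoly k q :=
  (List.ofFn (fun i => skewVar k q i ^ I i)).prod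


section AuxSkew

open MvPolynomial

namespace SkewAux

variable {k : Type*} [Field k] {n : ℕ} (q : Fin n → Fin n → kˣ)

/-- the twisting scalars: `t i j = q i j` if `i < j`, else `1`. -/
def t (i j : Fin n) : kˣ := if i < j then q i j else 1

/-- scaling factor of the diagonal automorphism `T i` on the monomial `K`. -/
def τ (i : Fin n) (K : Fin n →₀ ℕ) : kˣ := K.prod fun j e => (t q i j) ^ e

lemma τ_zero (i : Fin n) : τ q i 0 = 1 := Finsupp.prod_zero_index

lemma τ_add (i : Fin n) (K L : Fin n →₀ ℕ) : τ q i (K + L) = τ q i K * τ q i L :=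
  Finsupp.prod_add_index' (fun _ => pow_zero _) (fun _ _ _ => pow_add _ _ _)

lemma τ_single (i j : Fin n) (a : ℕ) : τ q i (Finsupp.single j a) = t q i j ^ a := by
  simp [τ, Finsupp.prod_single_index]

lemma t_self (i : Fin n) : t q i i = 1 := by simp [t]

lemma τ_add_single_self (i : Fin n) (K : Fin n →₀ ℕ) (a : ℕ) :
    τ q i (K + Finsupp.single i a) = τ q i K := by
  rw [τ_add, τ_single, t_self, one_pow, mul_one]

lemma t_ratio (hq1 : ∀ i : Fin n, q i i = 1) (hq2 : ∀ i j : Fin n, q i j = (q j i)⁻¹)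
    (i j : Fin n) : t q i j = q i j * t q j i := by
  rcases lt_trichotomy i j with h | h | h
  · rw [t, if_pos h, t, if_neg (not_lt.2 h.le), mul_one]
  · subst h; rw [t_self, hq1, one_mul]
  · rw [t, if_neg (not_lt.2 h.le), t, if_pos h, hq2 i j]
    exact (inv_mul_cancel (q j i)).symm


/-- the polynomial representation space -/
local notation "P" => MvPolynomial (Fin n) k

/-- the diagonal algebra endomorphism `T i` -/
def T (i : Fin n) : MvPolynomial (Fin n) k →ₐ[k] MvPolynomial (Fin n) k :=
  aeval fun j => C (t q i j : k) * X j

lemma val_τ (i : Fin n) (K : Fin n →₀ ℕ) :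
    (τ q i K : k) = ∏ j ∈ K.support, (t q i j : k) ^ K j := by
  rw [τ, Finsupp.prod]
  norm_cast

lemma T_monomial (i : Fin n) (K : Fin n →₀ ℕ) (b : k) :
    T q i (monomial K b) = C (τ q i K : k) * monomial K b := by
  rw [T, aeval_monomial]
  have h1 : (K.prod fun j e => (C (t q i j : k) * X j) ^ e)
      = C (τ q i K : k) * monomial K (1 : k) := by
    rw [Finsupp.prod]
    calc ∏ j ∈ K.support, (C (t q i j : k) * X j) ^ K j
        = ∏ j ∈ K.support, (C ((t q i j : k) ^ K j) * X j ^ K j) := by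
          refine Finset.prod_congr rfl fun j _ => ?_
          rw [mul_pow, map_pow]
      _ = (∏ j ∈ K.support, C ((t q i j : k) ^ K j)) * ∏ j ∈ K.support, X j ^ K j :=
          Finset.prod_mul_distrib
      _ = C (τ q i K : k) * monomial K (1 : k) := by
          rw [← map_prod, ← val_τ, prod_X_pow_eq_monomial]
  rw [h1, algebraMap_eq, ← mul_assoc, mul_comm (C b), mul_assoc, C_mul_monomial, mul_one]

/-- the endomorphism representing `x i` -/
def Xop (i : Fin n) : Module.End k (MvPolynomial (Fin n) k) :=
  (LinearMap.mulLeft k (X i : MvPolynomial (Fin n) k)) ∘ₗ (T q i).toLinearMap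

lemma Xop_monomial (i : Fin n) (K : Fin n →₀ ℕ) (b : k) :
    Xop q i (monomial K b) = monomial (K + Finsupp.single i 1) ((τ q i K : k) * b) := by
  rw [Xop, LinearMap.comp_apply, AlgHom.toLinearMap_apply, T_monomial,
    LinearMap.mulLeft_apply, C_mul_monomial, show (X i : MvPolynomial (Fin n) k) = X i ^ 1 from
      (pow_one _).symm, ← monomial_single_add, add_comm (Finsupp.single i 1) K]

lemma Xop_pow_monomial (i : Fin n) (a : ℕ) (K : Fin n →₀ ℕ) (b : k) :
    (Xop q i ^ a) (monomial K b)
      = monomial (K + Finsupp.single i a) (((τ q i K : k) ^ a) * b) := by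
  induction a generalizing K b with
  | zero => simp
  | succ a ih =>
    rw [pow_succ, Module.End.mul_apply, Xop_monomial, ih, τ_add_single_self, add_assoc,
      ← Finsupp.single_add]
    ring_nf

/-- exponent Finsupp accumulated along a list -/
def S (l : List (Fin n)) (I : Fin n → ℕ) : Fin n →₀ ℕ :=
  (l.map fun i => Finsupp.single i (I i)).sum

@[simp] lemma S_nil (I : Fin n → ℕ) : S (n := n) [] I = 0 := rfl

@[simp] lemma S_cons (i : Fin n) (l : List (Fin n)) (I : Fin n → ℕ) :
    S (i :: l) I = Finsupp.single i (I i) + S l I := by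
  simp [S]

lemma S_finRange (I : Fin n → ℕ) :
    S (List.finRange n) I = Finsupp.equivFunOnFinite.symm I := by
  have : S (List.finRange n) I = ∑ i : Fin n, Finsupp.single i (I i) := by
    rw [S, ← List.ofFn_eq_map, List.sum_ofFn]
  rw [this]
  have h2 := Finsupp.univ_sum_single (Finsupp.equivFunOnFinite.symm I)
  simp only [Finsupp.coe_equivFunOnFinite_symm] at h2
  exact h2

/-- the accumulated unit scalar for applying an ordered monomial to the constant 1 -/
def U : List (Fin n) → (Fin n → ℕ) → kˣ
  | [], _ => 1
  | (i :: l), I => τ q i (S l I) ^ (I i) * U l I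

/-- bilinear pairing scalar -/
def ρ (l : List (Fin n)) (I : Fin n → ℕ) (K : Fin n →₀ ℕ) : kˣ :=
  (l.map fun i => τ q i K ^ (I i)).prod

@[simp] lemma ρ_nil (I : Fin n → ℕ) (K : Fin n →₀ ℕ) : ρ q [] I K = 1 := rfl

@[simp] lemma ρ_cons (i : Fin n) (l : List (Fin n)) (I : Fin n → ℕ) (K : Fin n →₀ ℕ) :
    ρ q (i :: l) I K = τ q i K ^ (I i) * ρ q l I K := by
  simp [ρ]

lemma ρ_zero (l : List (Fin n)) (I : Fin n → ℕ) : ρ q l I 0 = 1 := by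
  induction l with
  | nil => rfl
  | cons i l ih => rw [ρ_cons, ih, τ_zero, one_pow, one_mul]

/-- the product of the `Xop i ^ I i` along a list -/
def prodEnd (l : List (Fin n)) (I : Fin n → ℕ) : Module.End k (MvPolynomial (Fin n) k) :=
  (l.map fun i => Xop q i ^ I i).prod

@[simp] lemma prodEnd_cons (i : Fin n) (l : List (Fin n)) (I : Fin n → ℕ) :
    prodEnd q (i :: l) I = Xop q i ^ I i * prodEnd q l I := by
  simp [prodEnd]

lemma prodEnd_monomial (l : List (Fin n)) (I : Fin n → ℕ) (K : Fin n →₀ ℕ) (b : k) :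
    prodEnd q l I (monomial K b)
      = monomial (K + S l I) (((ρ q l I K * U q l I : kˣ) : k) * b) := by
  induction l with
  | nil => simp [prodEnd, U]
  | cons i l ih =>
    rw [prodEnd_cons, Module.End.mul_apply, ih, Xop_pow_monomial, S_cons]
    congr 1
    · rw [add_assoc, add_comm (S l I) (Finsupp.single i (I i))]
    · rw [τ_add, ρ_cons, U]
      push_cast
      ring

lemma Xop_rel (hq1 : ∀ i : Fin n, q i i = 1) (hq2 : ∀ i j : Fin n, q i j = (q j i)⁻¹)
    (i j : Fin n) :
    Xop q i * Xop q j = (q i j : k) • (Xop q j * Xop q i) := by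
  apply LinearMap.ext; intro p
  induction p using MvPolynomial.induction_on' with
  | add p1 p2 h1 h2 => simp only [map_add, LinearMap.smul_apply] at h1 h2 ⊢; rw [h1, h2]
  | monomial K b =>
    rw [Module.End.mul_apply, LinearMap.smul_apply, Module.End.mul_apply, Xop_monomial,
      Xop_monomial, Xop_monomial, Xop_monomial, smul_monomial]
    rw [τ_add, τ_single, pow_one, τ_add, τ_single, pow_one]
    congr 1
    · rw [add_assoc, add_assoc, add_comm (Finsupp.single j 1)]
    · rw [smul_eq_mul, t_ratio q hq1 hq2 i j]
      push_cast
      ring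

variable (k) in
/-- the representation of the skew polynomial ring on polynomials -/
def rep (hq1 : ∀ i : Fin n, q i i = 1) (hq2 : ∀ i j : Fin n, q i j = (q j i)⁻¹) :
    SkewPoly k q →ₐ[k] Module.End k (MvPolynomial (Fin n) k) :=
  RingQuot.liftAlgHom k ⟨FreeAlgebra.lift k (fun i => Xop q i), by
    rintro a b ⟨i, j, rfl, rfl⟩
    rw [map_mul, map_smul, map_mul]
    simp only [FreeAlgebra.lift_ι_apply]
    exact Xop_rel q hq1 hq2 i j⟩

variable (hq1 : ∀ i : Fin n, q i i = 1) (hq2 : ∀ i j : Fin n, q i j = (q j i)⁻¹)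

lemma rep_var (i : Fin n) : rep k q hq1 hq2 (skewVar k q i) = Xop q i := by
  rw [skewVar, rep, RingQuot.liftAlgHom_mkAlgHom_apply, FreeAlgebra.lift_ι_apply]

lemma rep_monomial (I : Fin n → ℕ) :
    rep k q hq1 hq2 (skewMonomial k q I) = prodEnd q (List.finRange n) I := by
  rw [skewMonomial, List.ofFn_eq_map, map_list_prod, List.map_map, prodEnd]
  congr 1
  apply List.map_congr_left
  intro i _
  simp [map_pow, rep_var]

/-- the full bicharacter value -/
def χ (I J : Fin n → ℕ) : kˣ := ∏ i : Fin n, ∏ j : Fin n, q i j ^ (I i * J j)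

lemma xc (i j : Fin n) :
    skewVar k q i * skewVar k q j = (q i j : k) • (skewVar k q j * skewVar k q i) := by
  have h := RingQuot.mkAlgHom_rel k (s := skewRel k q)
    (⟨i, j, rfl, rfl⟩ : skewRel k q (FreeAlgebra.ι k i * FreeAlgebra.ι k j)
      ((q i j : k) • (FreeAlgebra.ι k j * FreeAlgebra.ι k i)))
  rw [map_mul, map_smul, map_mul] at h
  exact h

lemma xc_pow1 (i j : Fin n) (a : ℕ) :
    skewVar k q i ^ a * skewVar k q j
      = ((q i j : k) ^ a) • (skewVar k q j * skewVar k q i ^ a) := by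
  induction a with
  | zero => simp
  | succ a ih =>
    rw [pow_succ, mul_assoc, xc, mul_smul_comm, ← mul_assoc, ih, smul_mul_assoc,
      smul_smul, pow_succ, mul_assoc, mul_comm ((q i j : k) ^ a)]

lemma xc_pow (i j : Fin n) (a b : ℕ) :
    skewVar k q i ^ a * skewVar k q j ^ b
      = ((q i j : k) ^ (a * b)) • (skewVar k q j ^ b * skewVar k q i ^ a) := by
  induction b with
  | zero => simp
  | succ b ih =>
    rw [pow_succ, ← mul_assoc, ih, smul_mul_assoc, mul_assoc, xc_pow1, mul_smul_comm,
      smul_smul, ← mul_assoc, ← pow_add, Nat.mul_succ]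

/-- ordered products of powers of the variables along a list -/
def Pm (l : List (Fin n)) (J : Fin n → ℕ) : SkewPoly k q :=
  (l.map fun j => skewVar k q j ^ J j).prod

@[simp] lemma Pm_cons (j : Fin n) (l : List (Fin n)) (J : Fin n → ℕ) :
    Pm q (j :: l) J = skewVar k q j ^ J j * Pm q l J := by simp [Pm]

lemma skewMonomial_eq_Pm (J : Fin n → ℕ) :
    skewMonomial k q J = Pm q (List.finRange n) J := by
  rw [skewMonomial, Pm, List.ofFn_eq_map]

lemma xc_pow_Pm (i : Fin n) (a : ℕ) (J : Fin n → ℕ) (l : List (Fin n)) :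
    skewVar k q i ^ a * Pm q l J
      = ((l.map fun j => (q i j : k) ^ (a * J j)).prod) • (Pm q l J * skewVar k q i ^ a) := by
  induction l with
  | nil => simp [Pm]
  | cons j l ih =>
    rw [Pm_cons, ← mul_assoc, xc_pow, smul_mul_assoc, mul_assoc, ih, mul_smul_comm,
      smul_smul, List.map_cons, List.prod_cons, ← mul_assoc]

lemma Pm_mul_monomial (I J : Fin n → ℕ) (l : List (Fin n)) :
    Pm q l I * skewMonomial k q J
      = ((l.map fun i => ((List.finRange n).map fun j => (q i j : k) ^ (I i * J j)).prod).prod)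
          • (skewMonomial k q J * Pm q l I) := by
  induction l with
  | nil => simp [Pm]
  | cons i l ih =>
    rw [Pm_cons, mul_assoc, ih, mul_smul_comm, ← mul_assoc,
      skewMonomial_eq_Pm, xc_pow_Pm, smul_mul_assoc, smul_smul, List.map_cons,
      List.prod_cons]
    rw [mul_comm, mul_assoc]

lemma monomial_commute (I J : Fin n → ℕ) :
    skewMonomial k q I * skewMonomial k q J
      = ((χ q I J : kˣ) : k) • (skewMonomial k q J * skewMonomial k q I) := by
  rw [skewMonomial_eq_Pm q I, Pm_mul_monomial, ← skewMonomial_eq_Pm]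
  congr 1
  rw [← List.ofFn_eq_map, List.prod_ofFn]
  rw [show (χ q I J : k) = ∏ i : Fin n, ∏ j : Fin n, (q i j : k) ^ (I i * J j) by
    rw [χ]; norm_cast]
  refine Finset.prod_congr rfl fun i _ => ?_
  rw [← List.ofFn_eq_map, List.prod_ofFn]

lemma τ_equiv (i : Fin n) (J : Fin n → ℕ) :
    τ q i (Finsupp.equivFunOnFinite.symm J) = ∏ j : Fin n, t q i j ^ J j := by
  rw [τ, Finsupp.prod_fintype _ _ (fun j => pow_zero _)]
  simp

lemma ρ_finRange (I : Fin n → ℕ) (K : Fin n →₀ ℕ) :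
    ρ q (List.finRange n) I K = ∏ i : Fin n, τ q i K ^ I i := by
  rw [ρ, ← List.ofFn_eq_map, List.prod_ofFn]

lemma ρ_expand (I J : Fin n → ℕ) :
    ρ q (List.finRange n) I (Finsupp.equivFunOnFinite.symm J)
      = ∏ i : Fin n, ∏ j : Fin n, t q i j ^ (I i * J j) := by
  rw [ρ_finRange]
  refine Finset.prod_congr rfl fun i _ => ?_
  rw [τ_equiv, ← Finset.prod_pow]
  refine Finset.prod_congr rfl fun j _ => ?_
  rw [← pow_mul, mul_comm (J j)]

lemma χ_eq_ρ_div (hq1 : ∀ i : Fin n, q i i = 1) (hq2 : ∀ i j : Fin n, q i j = (q j i)⁻¹)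
    (I J : Fin n → ℕ) :
    χ q I J = ρ q (List.finRange n) I (Finsupp.equivFunOnFinite.symm J)
      * (ρ q (List.finRange n) J (Finsupp.equivFunOnFinite.symm I))⁻¹ := by
  rw [ρ_expand, ρ_expand]
  have h2 : (∏ i : Fin n, ∏ j : Fin n, t q i j ^ (J i * I j))
      = ∏ i : Fin n, ∏ j : Fin n, t q j i ^ (I i * J j) := by
    rw [Finset.prod_comm]
    exact Finset.prod_congr rfl fun i _ => Finset.prod_congr rfl fun j _ => by
      rw [mul_comm (I i)]
  rw [h2, χ]
  rw [← Finset.prod_inv_distrib, ← Finset.prod_mul_distrib]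
  refine Finset.prod_congr rfl fun i _ => ?_
  rw [← Finset.prod_inv_distrib, ← Finset.prod_mul_distrib]
  refine Finset.prod_congr rfl fun j _ => ?_
  rw [← inv_pow, ← mul_pow]
  congr 1
  rw [t_ratio q hq1 hq2 i j, mul_assoc, mul_inv_cancel, mul_one]

section LexHelp

lemma addle {a a' b b' : Fin n →₀ ℕ} (h1 : toLex a ≤ toLex a') (h2 : toLex b ≤ toLex b') :
    toLex (a + b) ≤ toLex (a' + b') := by
  calc toLex (a + b) = toLex a + toLex b := rfl
    _ ≤ toLex a' + toLex b := add_le_add_left h1 _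
    _ ≤ toLex a' + toLex b' := add_le_add_right h2 _

lemma unique_pair {a a' b b' : Fin n →₀ ℕ} (h1 : toLex a ≤ toLex a') (h2 : toLex b ≤ toLex b')
    (h : a + b = a' + b') : a = a' ∧ b = b' := by
  rcases h1.lt_or_eq with h1' | h1'
  · exfalso
    have : toLex (a + b) < toLex (a' + b') := by
      calc toLex (a + b) = toLex a + toLex b := rfl
        _ < toLex a' + toLex b := add_lt_add_left h1' _
        _ ≤ toLex a' + toLex b' := add_le_add_right h2 _
    rw [h] at this
    exact lt_irrefl _ this
  · have ha : a = a' := toLex.injective h1'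
    subst ha
    exact ⟨rfl, add_left_cancel h⟩

end LexHelp

variable {q} in
lemma chi_eq_one (hq1 : ∀ i : Fin n, q i i = 1) (hq2 : ∀ i j : Fin n, q i j = (q j i)⁻¹)
    (f : SkewPoly k q) (s : Finset (Fin n → ℕ)) (c : (Fin n → ℕ) → k)
    (hc : ∀ I ∈ s, c I ≠ 0)
    (hrep : f = ∑ I ∈ s, c I • skewMonomial k q I)
    (hfn₂ : ∀ a : SkewPoly k q, ∃ b : SkewPoly k q, a * f = f * b) :
    ∀ I ∈ s, ∀ J ∈ s, χ q I J = 1 := by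
  intro I hI J hJ
  classical
  set Φ := rep k q hq1 hq2 with hΦ
  set eF : (Fin n → ℕ) → (Fin n →₀ ℕ) := fun I => Finsupp.equivFunOnFinite.symm I with heF
  have heFinj : Function.Injective eF := Finsupp.equivFunOnFinite.symm.injective
  set ρf : (Fin n → ℕ) → (Fin n →₀ ℕ) → kˣ := fun Ia K => ρ q (List.finRange n) Ia K with hρf
  set Uf : (Fin n → ℕ) → kˣ := fun Ia => U q (List.finRange n) Ia with hUf
  -- evaluation of a skew monomial on a polynomial monomial
  have evalMon : ∀ (Ia : Fin n → ℕ) (K : Fin n →₀ ℕ) (b0 : k),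
      Φ (skewMonomial k q Ia) (monomial K b0)
        = monomial (K + eF Ia) (((ρf Ia K * Uf Ia : kˣ) : k) * b0) := by
    intro Ia K b0
    rw [hΦ, rep_monomial, prodEnd_monomial, S_finRange]
  obtain ⟨b, hb⟩ := hfn₂ (skewMonomial k q I)
  set p : MvPolynomial (Fin n) k := Φ b 1 with hp
  set A : (Fin n → ℕ) → k := fun J' => ((ρf I (eF J') * Uf I : kˣ) : k) * (c J' * (Uf J' : k))
    with hA
  set B : (Fin n → ℕ) → (Fin n →₀ ℕ) → k :=
    fun J' K => c J' * (((ρf J' K * Uf J' : kˣ) : k) * p.coeff K) with hB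
  have hAne : ∀ J' ∈ s, A J' ≠ 0 := by
    intro J' hJ'
    simp only [hA]
    exact mul_ne_zero (Units.ne_zero _) (mul_ne_zero (hc J' hJ') (Units.ne_zero _))
  have hBne : ∀ J' ∈ s, ∀ K ∈ p.support, B J' K ≠ 0 := by
    intro J' hJ' K hK
    exact mul_ne_zero (hc J' hJ')
      (mul_ne_zero (Units.ne_zero _) (mem_support_iff.mp hK))
  -- the fundamental equation
  have hE : (∑ J' ∈ s, monomial (eF J' + eF I) (A J'))
      = ∑ J' ∈ s, ∑ K ∈ p.support, monomial (K + eF J') (B J' K) := by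
    have h0 : Φ (skewMonomial k q I * f) 1 = Φ (f * b) 1 := by rw [hb]
    have hΦf1 : Φ f 1 = ∑ J' ∈ s, monomial (eF J') (c J' * (Uf J' : k)) := by
      rw [hrep, map_sum, LinearMap.sum_apply]
      refine Finset.sum_congr rfl fun J' _ => ?_
      rw [map_smul, LinearMap.smul_apply,
        show (1 : MvPolynomial (Fin n) k) = monomial 0 1 by rw [monomial_zero', C_1],
        evalMon, smul_monomial]
      have : ρf J' 0 = 1 := ρ_zero q _ _
      rw [this, one_mul, mul_one, zero_add, smul_eq_mul]
    calc (∑ J' ∈ s, monomial (eF J' + eF I) (A J'))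
        = Φ (skewMonomial k q I * f) 1 := by
          rw [map_mul, Module.End.mul_apply, hΦf1, map_sum]
          refine Finset.sum_congr rfl fun J' _ => ?_
          rw [evalMon]
      _ = Φ (f * b) 1 := h0
      _ = ∑ J' ∈ s, ∑ K ∈ p.support, monomial (K + eF J') (B J' K) := by
          rw [map_mul, Module.End.mul_apply, ← hp, hrep, map_sum, LinearMap.sum_apply]
          refine Finset.sum_congr rfl fun J' _ => ?_
          rw [map_smul, LinearMap.smul_apply]
          conv_lhs => rw [p.as_sum]
          rw [map_sum, Finset.smul_sum]
          refine Finset.sum_congr rfl fun K hK => ?_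
          rw [evalMon, smul_monomial, smul_eq_mul]
  -- coefficient of the left side
  have coeffL : ∀ J₀ ∈ s, coeff (eF J₀ + eF I) (∑ J' ∈ s, monomial (eF J' + eF I) (A J')) = A J₀ := by
    intro J₀ hJ₀
    rw [coeff_sum]
    rw [Finset.sum_eq_single_of_mem J₀ hJ₀]
    · rw [coeff_monomial, if_pos rfl]
    · intro J' hJ' hne
      rw [coeff_monomial, if_neg]
      intro hcon
      exact hne (heFinj (by rwa [add_right_cancel_iff] at hcon))
  -- support of p is nonempty
  have hp0 : p.support.Nonempty := by
    by_contra hcon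
    rw [Finset.not_nonempty_iff_eq_empty] at hcon
    have hz : (∑ J' ∈ s, monomial (eF J' + eF I) (A J')) = 0 := by
      rw [hE]
      exact Finset.sum_eq_zero fun J' _ => by rw [hcon, Finset.sum_empty]
    have h1 := coeffL I hI
    rw [hz, coeff_zero] at h1
    exact hAne I hI h1.symm
  obtain ⟨Kmx, hKmx, hKmax⟩ := Finset.exists_max_image p.support toLex hp0
  obtain ⟨Imx, hImx, hImax⟩ := Finset.exists_max_image s (fun J' => toLex (eF J')) ⟨I, hI⟩
  obtain ⟨Kmn, hKmn, hKmin⟩ := Finset.exists_min_image p.support toLex hp0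
  obtain ⟨Imn, hImn, hImin⟩ := Finset.exists_min_image s (fun J' => toLex (eF J')) ⟨I, hI⟩
  have hRcoeff : ∀ (Ix : Fin n → ℕ) (Kx : Fin n →₀ ℕ), Ix ∈ s → Kx ∈ p.support →
      (∀ J' ∈ s, ∀ K ∈ p.support, K + eF J' = eF Ix + Kx → J' = Ix ∧ K = Kx) →
      coeff (eF Ix + Kx) (∑ J' ∈ s, ∑ K ∈ p.support, monomial (K + eF J') (B J' K))
        = B Ix Kx := by
    intro Ix Kx hIx hKx huniq
    rw [coeff_sum]
    rw [Finset.sum_eq_single_of_mem Ix hIx ?_]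
    · rw [coeff_sum, Finset.sum_eq_single_of_mem Kx hKx ?_]
      · rw [coeff_monomial, if_pos (add_comm _ _)]
      · intro K hK hne
        rw [coeff_monomial, if_neg fun hcon => hne ((huniq Ix hIx K hK hcon).2)]
    · intro J' hJ' hne
      rw [coeff_sum]
      refine Finset.sum_eq_zero fun K hK => ?_
      rw [coeff_monomial, if_neg fun hcon => hne ((huniq J' hJ' K hK hcon).1)]
  have hexL : ∀ M : Fin n →₀ ℕ,
      coeff M (∑ J' ∈ s, monomial (eF J' + eF I) (A J')) ≠ 0 →
      ∃ J₁ ∈ s, eF J₁ + eF I = M := by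
    intro M hM
    by_contra hcon
    push_neg at hcon
    refine hM ?_
    rw [coeff_sum]
    exact Finset.sum_eq_zero fun J' hJ' => by
      rw [coeff_monomial, if_neg (hcon J' hJ')]
  have hexR : ∀ M : Fin n →₀ ℕ,
      coeff M (∑ J' ∈ s, ∑ K ∈ p.support, monomial (K + eF J') (B J' K)) ≠ 0 →
      ∃ J₂ ∈ s, ∃ K₂ ∈ p.support, K₂ + eF J₂ = M := by
    intro M hM
    by_contra hcon
    push_neg at hcon
    refine hM ?_
    rw [coeff_sum]
    refine Finset.sum_eq_zero fun J' hJ' => ?_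
    rw [coeff_sum]
    exact Finset.sum_eq_zero fun K hK => by
      rw [coeff_monomial, if_neg (hcon J' hJ' K hK)]
  -- max analysis
  have hmx : Kmx = eF I := by
    have huniq : ∀ J' ∈ s, ∀ K ∈ p.support, K + eF J' = eF Imx + Kmx → J' = Imx ∧ K = Kmx := by
      intro J' hJ' K hK hcon
      rw [add_comm K] at hcon
      obtain ⟨h1, h2⟩ := unique_pair (hImax J' hJ') (hKmax K hK) hcon
      exact ⟨heFinj h1, h2⟩
    have h1 := hRcoeff Imx Kmx hImx hKmx huniq
    have h2 : coeff (eF Imx + Kmx) (∑ J' ∈ s, monomial (eF J' + eF I) (A J')) ≠ 0 := by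
      rw [hE, h1]
      exact hBne Imx hImx Kmx hKmx
    obtain ⟨J₁, hJ₁, he1⟩ := hexL _ h2
    have h3 : coeff (eF Imx + eF I) (∑ J' ∈ s, ∑ K ∈ p.support, monomial (K + eF J') (B J' K)) ≠ 0 := by
      rw [← hE, coeffL Imx hImx]
      exact hAne Imx hImx
    obtain ⟨J₂, hJ₂, K₂, hK₂, he2⟩ := hexR _ h3
    have c1 : toLex (eF Imx + Kmx) ≤ toLex (eF Imx + eF I) := by
      rw [← he1]
      exact addle (hImax J₁ hJ₁) le_rfl
    have c2 : toLex (eF Imx + eF I) ≤ toLex (eF Imx + Kmx) := by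
      rw [← he2, add_comm (eF Imx) Kmx]
      exact addle (hKmax K₂ hK₂) (hImax J₂ hJ₂)
    exact add_left_cancel (toLex.injective (le_antisymm c1 c2))
  -- min analysis
  have hmn : Kmn = eF I := by
    have huniq : ∀ J' ∈ s, ∀ K ∈ p.support, K + eF J' = eF Imn + Kmn → J' = Imn ∧ K = Kmn := by
      intro J' hJ' K hK hcon
      rw [add_comm K] at hcon
      obtain ⟨h1, h2⟩ := unique_pair (hImin J' hJ') (hKmin K hK) hcon.symm
      exact ⟨(heFinj h1).symm, h2.symm⟩
    have h1 := hRcoeff Imn Kmn hImn hKmn huniq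
    have h2 : coeff (eF Imn + Kmn) (∑ J' ∈ s, monomial (eF J' + eF I) (A J')) ≠ 0 := by
      rw [hE, h1]
      exact hBne Imn hImn Kmn hKmn
    obtain ⟨J₁, hJ₁, he1⟩ := hexL _ h2
    have h3 : coeff (eF Imn + eF I) (∑ J' ∈ s, ∑ K ∈ p.support, monomial (K + eF J') (B J' K)) ≠ 0 := by
      rw [← hE, coeffL Imn hImn]
      exact hAne Imn hImn
    obtain ⟨J₂, hJ₂, K₂, hK₂, he2⟩ := hexR _ h3
    have c1 : toLex (eF Imn + eF I) ≤ toLex (eF Imn + Kmn) := by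
      rw [← he1]
      exact addle (hImin J₁ hJ₁) le_rfl
    have c2 : toLex (eF Imn + Kmn) ≤ toLex (eF Imn + eF I) := by
      rw [← he2, add_comm (eF Imn) Kmn]
      exact addle (hKmin K₂ hK₂) (hImin J₂ hJ₂)
    exact add_left_cancel (toLex.injective (le_antisymm c2 c1))
  have hsupp : p.support = {eF I} := by
    apply Finset.eq_singleton_iff_unique_mem.mpr
    refine ⟨hmx ▸ hKmx, fun K hK => ?_⟩
    have l1 : toLex K ≤ toLex (eF I) := hmx ▸ hKmax K hK
    have l2 : toLex (eF I) ≤ toLex K := hmn ▸ hKmin K hK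
    exact toLex.injective (le_antisymm l1 l2)
  -- final coefficient comparison
  have key : ∀ J₀ ∈ s, B J₀ (eF I) = A J₀ := by
    intro J₀ hJ₀
    have h1 := coeffL J₀ hJ₀
    rw [hE, hsupp] at h1
    simp only [Finset.sum_singleton] at h1
    rw [coeff_sum, Finset.sum_eq_single_of_mem J₀ hJ₀ ?_] at h1
    · rwa [coeff_monomial, if_pos (add_comm _ _)] at h1
    · intro J' hJ' hne
      rw [coeff_monomial, if_neg]
      intro hcon
      rw [add_comm (eF I)] at hcon
      exact hne (heFinj (add_right_cancel hcon))
  -- unravel the scalar equations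
  have hcancel : ∀ J₀ ∈ s, ((ρf J₀ (eF I) : kˣ) : k) * p.coeff (eF I) = ((ρf I (eF J₀) * Uf I : kˣ) : k) := by
    intro J₀ hJ₀
    have h1 := key J₀ hJ₀
    simp only [hA, hB] at h1
    have hcne := hc J₀ hJ₀
    have hUne : ((Uf J₀ : kˣ) : k) ≠ 0 := Units.ne_zero _
    apply mul_right_cancel₀ (mul_ne_zero hcne hUne)
    simp only [Units.val_mul] at h1 ⊢
    linear_combination h1
  have hβ : p.coeff (eF I) = ((Uf I : kˣ) : k) := by
    have h1 := hcancel I hI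
    simp only [Units.val_mul] at h1
    exact mul_left_cancel₀ (Units.ne_zero (ρf I (eF I))) h1
  have hρeq : ((ρf J (eF I) : kˣ) : k) = ((ρf I (eF J) : kˣ) : k) := by
    have h1 := hcancel J hJ
    rw [hβ] at h1; simp only [Units.val_mul] at h1
    exact mul_right_cancel₀ (Units.ne_zero (Uf I)) h1
  -- conclude
  have hρequ : ρf J (eF I) = ρf I (eF J) := Units.ext hρeq
  rw [χ_eq_ρ_div q hq1 hq2 I J]
  have : ρ q (List.finRange n) J (Finsupp.equivFunOnFinite.symm I)
      = ρ q (List.finRange n) I (Finsupp.equivFunOnFinite.symm J) := hρequ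
  rw [this, mul_inv_cancel]

end SkewAux


/-- If f is a homogeneous normal element of the skew polynomial ring Q,
written f = Σ_{I ∈ s} c_I x^I with all c_I ≠ 0, then any two monomials x^I, x^J appearing
in f commute with each other (i.e. χ(x^I, x^J) = 1). -/
theorem skewPoly_normal_support_monomials_commute {k : Type*} [Field k] {n : ℕ}
    (q : Fin n → Fin n → kˣ)
    (hq1 : ∀ i : Fin n, q i i = 1)
    (hq2 : ∀ i j : Fin n, q i j = (q j i)⁻¹)
    (d : ℕ) (f : SkewPoly k q)
    (s : Finset (Fin n → ℕ)) (c : (Fin n → ℕ) → k)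
    (hc : ∀ I ∈ s, c I ≠ 0)
    (hrep : f = ∑ I ∈ s, c I • skewMonomial k q I)
    -- f is homogeneous of internal degree d
    (hhom : ∀ I ∈ s, (∑ i : Fin n, I i) = d)
    -- f is normal: fQ = Qf
    (hfn₁ : ∀ a : SkewPoly k q, ∃ b : SkewPoly k q, f * a = b * f)
    (hfn₂ : ∀ a : SkewPoly k q, ∃ b : SkewPoly k q, a * f = f * b) :
    ∀ I ∈ s, ∀ J ∈ s,
      skewMonomial k q I * skewMonomial k q J = skewMonomial k q J * skewMonomial k q I := by
  intro I hI J hJ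
  rw [SkewAux.monomial_commute q I J,
    SkewAux.chi_eq_one hq1 hq2 f s c hc hrep hfn₂ I hI J hJ, Units.val_one, one_smul]

end AuxSkew
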